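/- Let a > b > 0. For any triangle P₁P₂P₃ inscribed in the circle of radius a + b centered at the origin whose three side lines are each tangent to the concentric ellipse x²/a² + y²/b² = 1 (i.e., each side lies on a line {(x,y) : p·x + q·y = 1} with a²p² + b²q² = 1), the cosine of each interior angle lies in the closed interval [b/(a+b), a/(a+b)]. In particular every triangle of this family is acute. -/

import Mathlib

open EuclideanGeometry

/-- The line through `P` and `Q` is tangent to the ellipse `x²/a² + y²/b² = 1`:
it lies on a line `{(x,y) : p·x + q·y = 1}` with `a²p² + b²q² = 1`. -/
def SideTangentToEllipse (a b : ℝ) (P Q : EuclideanSpace ℝ (Fin 2)) : Prop :=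
  ∃ p q : ℝ, a ^ 2 * p ^ 2 + b ^ 2 * q ^ 2 = 1 ∧
    p * P 0 + q * P 1 = 1 ∧ p * Q 0 + q * Q 1 = 1

/-- From tangency of the chord through two points of the circle of radius `a+b`,
derive the key bilinear relation. -/
private lemma tangent_rel (a b : ℝ) (hb : 0 < b) (hab : b < a)
    (xi yi xj yj : ℝ)
    (hci : xi ^ 2 + yi ^ 2 = (a + b) ^ 2) (hcj : xj ^ 2 + yj ^ 2 = (a + b) ^ 2)
    (hd : 0 < (xi - xj) ^ 2 + (yi - yj) ^ 2)
    (p q : ℝ) (e3 : a ^ 2 * p ^ 2 + b ^ 2 * q ^ 2 = 1)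
    (ei : p * xi + q * yi = 1) (ej : p * xj + q * yj = 1) :
    b * (xi * xj) + a * (yi * yj) = -(a * b * (a + b)) := by
  have hp : p * (xi * yj - xj * yi) = yj - yi := by linear_combination yj * ei - yi * ej
  have hq : q * (xi * yj - xj * yi) = xi - xj := by linear_combination xi * ej - xj * ei
  have hT : a ^ 2 * (yi - yj) ^ 2 + b ^ 2 * (xi - xj) ^ 2 = (xi * yj - xj * yi) ^ 2 := by
    linear_combination (xi * yj - xj * yi) ^ 2 * e3
      - a ^ 2 * (p * (xi * yj - xj * yi) + yj - yi) * hp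
      - b ^ 2 * (q * (xi * yj - xj * yi) + xi - xj) * hq
  have hprod : (b * (xi * xj) + a * (yi * yj) + a * b * (a + b))
      * ((a + b) ^ 2 - xi * xj - yi * yj) = 0 := by
    linear_combination (-(a + b) / 2) * hT
      + (-(b * xj ^ 2) - ((a + b) / 2) * (yj ^ 2 - b ^ 2)) * hci
      + (-(b * ((a + b) ^ 2 - yi ^ 2)) - ((a + b) / 2) * (yi ^ 2 - b ^ 2)) * hcj
  have hpos : 0 < (a + b) ^ 2 - xi * xj - yi * yj := by
    have h2 : (xi - xj) ^ 2 + (yi - yj) ^ 2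
        = 2 * ((a + b) ^ 2 - xi * xj - yi * yj) := by linear_combination hci + hcj
    linarith
  rcases mul_eq_zero.mp hprod with h | h
  · linarith
  · exfalso; linarith

/-- Chord distance bounds: `2b² - (a+b)² ≤ x_i x_j + y_i y_j ≤ 2a² - (a+b)²`. -/
private lemma pair_bound (a b : ℝ) (hb : 0 < b) (hab : b < a)
    (xi yi xj yj : ℝ)
    (hci : xi ^ 2 + yi ^ 2 = (a + b) ^ 2) (hcj : xj ^ 2 + yj ^ 2 = (a + b) ^ 2)
    (hK : b * (xi * xj) + a * (yi * yj) = -(a * b * (a + b))) :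
    2 * b ^ 2 - (a + b) ^ 2 ≤ xi * xj + yi * yj ∧
      xi * xj + yi * yj ≤ 2 * a ^ 2 - (a + b) ^ 2 := by
  have hHG : (xi * xj - yi * yj) ^ 2 + (xi * yj + xj * yi) ^ 2 = ((a + b) ^ 2) ^ 2 := by
    linear_combination (xj ^ 2 + yj ^ 2) * hci + (a + b) ^ 2 * hcj
  have hlin : (a + b) * ((xi * xj + yi * yj) + 2 * a * b)
      = (a - b) * (xi * xj - yi * yj) := by
    linear_combination 2 * hK
  have hR2 : 0 < (a + b) ^ 2 := by nlinarith
  have h5 : 0 ≤ (xi * xj - yi * yj) + (a + b) ^ 2 := by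
    nlinarith [sq_nonneg (xi * xj - yi * yj + (a + b) ^ 2), sq_nonneg (xi * yj + xj * yi)]
  have h6 : (xi * xj - yi * yj) ≤ (a + b) ^ 2 := by
    nlinarith [sq_nonneg (xi * xj - yi * yj - (a + b) ^ 2), sq_nonneg (xi * yj + xj * yi)]
  have hab' : (0:ℝ) ≤ a - b := by linarith
  have hlo : 0 ≤ (a - b) * ((xi * xj - yi * yj) + (a + b) ^ 2) := mul_nonneg hab' h5
  have hhi : 0 ≤ (a - b) * ((a + b) ^ 2 - (xi * xj - yi * yj)) := mul_nonneg hab' (by linarith)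
  constructor
  · nlinarith [hlin, hlo]
  · nlinarith [hlin, hhi]

/-- Conversion of squared bounds to a bound on the cosine ratio (lower). -/
private lemma div_lower (c R I n2 n3 d : ℝ) (hR : 0 < R) (hn2 : 0 < n2) (hn3 : 0 < n3)
    (hI : 0 ≤ I) (hc : 0 ≤ c) (hkey : (R * I) ^ 2 = d * (n2 * n3)) (hlo : c ^ 2 ≤ d) :
    c / R ≤ I / (Real.sqrt n2 * Real.sqrt n3) := by
  have hs2 : Real.sqrt n2 ^ 2 = n2 := Real.sq_sqrt hn2.le
  have hs3 : Real.sqrt n3 ^ 2 = n3 := Real.sq_sqrt hn3.le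
  have hs2p : 0 < Real.sqrt n2 := Real.sqrt_pos.mpr hn2
  have hs3p : 0 < Real.sqrt n3 := Real.sqrt_pos.mpr hn3
  have hN : 0 < Real.sqrt n2 * Real.sqrt n3 := mul_pos hs2p hs3p
  have hsq : (c * (Real.sqrt n2 * Real.sqrt n3)) ^ 2 ≤ (R * I) ^ 2 := by
    have h1 : (c * (Real.sqrt n2 * Real.sqrt n3)) ^ 2 = c ^ 2 * (n2 * n3) := by
      rw [mul_pow, mul_pow, hs2, hs3]
    rw [h1, hkey]
    exact mul_le_mul_of_nonneg_right hlo (by positivity)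
  have hle : c * (Real.sqrt n2 * Real.sqrt n3) ≤ R * I := by
    nlinarith [mul_nonneg hc hN.le, mul_nonneg hR.le hI, hsq]
  rw [div_le_div_iff₀ hR hN]
  linarith

/-- Conversion of squared bounds to a bound on the cosine ratio (upper). -/
private lemma div_upper (c R I n2 n3 d : ℝ) (hR : 0 < R) (hn2 : 0 < n2) (hn3 : 0 < n3)
    (hI : 0 ≤ I) (hc : 0 ≤ c) (hkey : (R * I) ^ 2 = d * (n2 * n3)) (hhi : d ≤ c ^ 2) :
    I / (Real.sqrt n2 * Real.sqrt n3) ≤ c / R := by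
  have hs2 : Real.sqrt n2 ^ 2 = n2 := Real.sq_sqrt hn2.le
  have hs3 : Real.sqrt n3 ^ 2 = n3 := Real.sq_sqrt hn3.le
  have hs2p : 0 < Real.sqrt n2 := Real.sqrt_pos.mpr hn2
  have hs3p : 0 < Real.sqrt n3 := Real.sqrt_pos.mpr hn3
  have hN : 0 < Real.sqrt n2 * Real.sqrt n3 := mul_pos hs2p hs3p
  have hsq : (R * I) ^ 2 ≤ (c * (Real.sqrt n2 * Real.sqrt n3)) ^ 2 := by
    have h1 : (c * (Real.sqrt n2 * Real.sqrt n3)) ^ 2 = c ^ 2 * (n2 * n3) := by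
      rw [mul_pow, mul_pow, hs2, hs3]
    rw [h1, hkey]
    exact mul_le_mul_of_nonneg_right hhi (by positivity)
  have hle : R * I ≤ c * (Real.sqrt n2 * Real.sqrt n3) := by
    nlinarith [mul_nonneg hc hN.le, mul_nonneg hR.le hI, hsq]
  rw [div_le_div_iff₀ hN hR]
  linarith

private lemma pos_factor (C X P : ℝ) (hC : 0 < C) (hP : 0 < P) (h : C * X = P) : 0 < X := by
  by_contra hx
  push_neg at hx
  nlinarith

set_option maxHeartbeats 1000000 in
private lemma cos_bounds_aux (a b : ℝ) (hb : 0 < b) (hab : b < a)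
    (x1 y1 x2 y2 x3 y3 : ℝ)
    (hc1 : x1 ^ 2 + y1 ^ 2 = (a + b) ^ 2) (hc2 : x2 ^ 2 + y2 ^ 2 = (a + b) ^ 2)
    (hc3 : x3 ^ 2 + y3 ^ 2 = (a + b) ^ 2)
    (hK12 : b * (x1 * x2) + a * (y1 * y2) = -(a * b * (a + b)))
    (hK23 : b * (x2 * x3) + a * (y2 * y3) = -(a * b * (a + b)))
    (hK13 : b * (x1 * x3) + a * (y1 * y3) = -(a * b * (a + b))) :
    b / (a + b) ≤ ((x2 - x1) * (x3 - x1) + (y2 - y1) * (y3 - y1)) /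
        (Real.sqrt ((x2 - x1) ^ 2 + (y2 - y1) ^ 2) *
          Real.sqrt ((x3 - x1) ^ 2 + (y3 - y1) ^ 2)) ∧
    ((x2 - x1) * (x3 - x1) + (y2 - y1) * (y3 - y1)) /
        (Real.sqrt ((x2 - x1) ^ 2 + (y2 - y1) ^ 2) *
          Real.sqrt ((x3 - x1) ^ 2 + (y3 - y1) ^ 2)) ≤ a / (a + b) := by
  have hR : (0:ℝ) < a + b := by linarith
  have ha : 0 < a := hb.trans hab
  obtain ⟨h23lo, h23hi⟩ := pair_bound a b hb hab x2 y2 x3 y3 hc2 hc3 hK23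
  obtain ⟨h12lo, h12hi⟩ := pair_bound a b hb hab x1 y1 x2 y2 hc1 hc2 hK12
  obtain ⟨h13lo, h13hi⟩ := pair_bound a b hb hab x1 y1 x3 y3 hc1 hc3 hK13
  have hn2 : (x2 - x1) ^ 2 + (y2 - y1) ^ 2 = 2 * (a + b) ^ 2 - 2 * (x1 * x2 + y1 * y2) := by
    linear_combination hc1 + hc2
  have hn3 : (x3 - x1) ^ 2 + (y3 - y1) ^ 2 = 2 * (a + b) ^ 2 - 2 * (x1 * x3 + y1 * y3) := by
    linear_combination hc1 + hc3
  have hIeq : (x2 - x1) * (x3 - x1) + (y2 - y1) * (y3 - y1)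
      = (a + b) ^ 2 + (x2 * x3 + y2 * y3) - (x1 * x3 + y1 * y3) - (x1 * x2 + y1 * y2) := by
    linear_combination hc1
  have hn2pos : 0 < (x2 - x1) ^ 2 + (y2 - y1) ^ 2 := by
    nlinarith [hn2, h12hi, mul_pos hb ha]
  have hn3pos : 0 < (x3 - x1) ^ 2 + (y3 - y1) ^ 2 := by
    nlinarith [hn3, h13hi, mul_pos hb ha]
  have hM2 : 0 < (b * x2 ^ 2 + a * y2 ^ 2) - a * b * (a + b) := by
    nlinarith [sq_nonneg y2, mul_pos (mul_pos hb hb) hR]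
  have hM3 : 0 < (b * x3 ^ 2 + a * y3 ^ 2) - a * b * (a + b) := by
    nlinarith [sq_nonneg y3, mul_pos (mul_pos hb hb) hR]
  have hM1 : 0 < (b * x1 ^ 2 + a * y1 ^ 2) + a * b * (a + b) := by
    nlinarith [sq_nonneg y1, mul_pos (mul_pos hb hb) hR, sq_nonneg x1,
      mul_pos (mul_pos ha hb) hR]
  have hCpos : 0 < 2 * a ^ 3 * b ^ 3 * (a + b) :=
    mul_pos (mul_pos (mul_pos (by norm_num : (0:ℝ) < 2) (pow_pos ha 3)) (pow_pos hb 3)) hR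
  have hU23 : 2 * (a + b) * a ^ 2 * b ^ 2 * (x2 * x3 + y2 * y3)
      = (a + b) * ((b * x2 ^ 2 + a * y2 ^ 2) * (b * x3 ^ 2 + a * y3 ^ 2)
        - a * b * (a + b) * ((b * x2 ^ 2 + a * y2 ^ 2) + (b * x3 ^ 2 + a * y3 ^ 2))
        - (a * b * (a + b)) ^ 2) := by
    have h1 : a ^ 2 * (y2 * y3) ^ 2 = (b * (x2 * x3) + a * b * (a + b)) ^ 2 := by
      linear_combination (a * (y2 * y3) - b * (x2 * x3) - a * b * (a + b)) * hK23
    have h2 : (x2 * x3) ^ 2 = ((a + b) ^ 2 - y2 ^ 2) * ((a + b) ^ 2 - y3 ^ 2) := by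
      linear_combination x3 ^ 2 * hc2 + ((a + b) ^ 2 - y2 ^ 2) * hc3
    linear_combination (2 * a ^ 2 * b * (a + b) - 2 * a * b * (a + b) * (a - b)) * hK23
      - (a - b) * h1 - b ^ 2 * (a - b) * h2
      + (b * (a + b) * (a * b * (a + b) - (b * x3 ^ 2 + a * y3 ^ 2))) * hc2
      + (b * (a + b) * (a * b * (a + b) - (b * (a + b) ^ 2 + (a - b) * y2 ^ 2))) * hc3
  have hU12 : 2 * (a + b) * a ^ 2 * b ^ 2 * (x1 * x2 + y1 * y2)
      = (a + b) * ((b * x1 ^ 2 + a * y1 ^ 2) * (b * x2 ^ 2 + a * y2 ^ 2)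
        - a * b * (a + b) * ((b * x1 ^ 2 + a * y1 ^ 2) + (b * x2 ^ 2 + a * y2 ^ 2))
        - (a * b * (a + b)) ^ 2) := by
    have h1 : a ^ 2 * (y1 * y2) ^ 2 = (b * (x1 * x2) + a * b * (a + b)) ^ 2 := by
      linear_combination (a * (y1 * y2) - b * (x1 * x2) - a * b * (a + b)) * hK12
    have h2 : (x1 * x2) ^ 2 = ((a + b) ^ 2 - y1 ^ 2) * ((a + b) ^ 2 - y2 ^ 2) := by
      linear_combination x2 ^ 2 * hc1 + ((a + b) ^ 2 - y1 ^ 2) * hc2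
    linear_combination (2 * a ^ 2 * b * (a + b) - 2 * a * b * (a + b) * (a - b)) * hK12
      - (a - b) * h1 - b ^ 2 * (a - b) * h2
      + (b * (a + b) * (a * b * (a + b) - (b * x2 ^ 2 + a * y2 ^ 2))) * hc1
      + (b * (a + b) * (a * b * (a + b) - (b * (a + b) ^ 2 + (a - b) * y1 ^ 2))) * hc2
  have hU13 : 2 * (a + b) * a ^ 2 * b ^ 2 * (x1 * x3 + y1 * y3)
      = (a + b) * ((b * x1 ^ 2 + a * y1 ^ 2) * (b * x3 ^ 2 + a * y3 ^ 2)
        - a * b * (a + b) * ((b * x1 ^ 2 + a * y1 ^ 2) + (b * x3 ^ 2 + a * y3 ^ 2))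
        - (a * b * (a + b)) ^ 2) := by
    have h1 : a ^ 2 * (y1 * y3) ^ 2 = (b * (x1 * x3) + a * b * (a + b)) ^ 2 := by
      linear_combination (a * (y1 * y3) - b * (x1 * x3) - a * b * (a + b)) * hK13
    have h2 : (x1 * x3) ^ 2 = ((a + b) ^ 2 - y1 ^ 2) * ((a + b) ^ 2 - y3 ^ 2) := by
      linear_combination x3 ^ 2 * hc1 + ((a + b) ^ 2 - y1 ^ 2) * hc3
    linear_combination (2 * a ^ 2 * b * (a + b) - 2 * a * b * (a + b) * (a - b)) * hK13
      - (a - b) * h1 - b ^ 2 * (a - b) * h2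
      + (b * (a + b) * (a * b * (a + b) - (b * x3 ^ 2 + a * y3 ^ 2))) * hc1
      + (b * (a + b) * (a * b * (a + b) - (b * (a + b) ^ 2 + (a - b) * y1 ^ 2))) * hc3
  have hstar : (b * x1 ^ 2 + a * y1 ^ 2) * ((b * x2 ^ 2 + a * y2 ^ 2) * (b * x3 ^ 2 + a * y3 ^ 2))
      = (a * b * (a + b)) ^ 2 * ((b * x1 ^ 2 + a * y1 ^ 2) + (b * x2 ^ 2 + a * y2 ^ 2)
        + (b * x3 ^ 2 + a * y3 ^ 2)) + 2 * (a * b * (a + b)) ^ 3 := by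
    linear_combination
      ((b * x1 ^ 2 + a * y1 ^ 2) * ((b * (x2 * x3) + a * (y2 * y3)) - a * b * (a + b))
        + 2 * (a * b * (a + b)) * (b * (x1 * x3) + a * (y1 * y3))) * hK23
      + ((b * x3 ^ 2 + a * y3 ^ 2) * ((b * (x1 * x2) + a * (y1 * y2)) - a * b * (a + b))
        - 2 * (b * (x2 * x3) + a * (y2 * y3)) * (b * (x1 * x3) + a * (y1 * y3))) * hK12
      + ((b * x2 ^ 2 + a * y2 ^ 2) * ((b * (x1 * x3) + a * (y1 * y3)) - a * b * (a + b))
        - 2 * (a * b * (a + b)) ^ 2) * hK13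
  have hIR : (a + b) * (2 * a ^ 3 * b ^ 3 * (a + b) * ((a + b) ^ 2 + (x2 * x3 + y2 * y3)
        - (x1 * x3 + y1 * y3) - (x1 * x2 + y1 * y2)))
      = (a + b) * (((b * x2 ^ 2 + a * y2 ^ 2) - a * b * (a + b))
        * ((b * x3 ^ 2 + a * y3 ^ 2) - a * b * (a + b))
        * ((b * x1 ^ 2 + a * y1 ^ 2) + a * b * (a + b))) := by
    linear_combination (a * b * (a + b)) * hU23 - (a * b * (a + b)) * hU12
      - (a * b * (a + b)) * hU13 - (a + b) * hstar
  have hI : 2 * a ^ 3 * b ^ 3 * (a + b) * ((a + b) ^ 2 + (x2 * x3 + y2 * y3)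
        - (x1 * x3 + y1 * y3) - (x1 * x2 + y1 * y2))
      = ((b * x2 ^ 2 + a * y2 ^ 2) - a * b * (a + b))
        * ((b * x3 ^ 2 + a * y3 ^ 2) - a * b * (a + b))
        * ((b * x1 ^ 2 + a * y1 ^ 2) + a * b * (a + b)) :=
    mul_left_cancel₀ (ne_of_gt hR) hIR
  clear hU23 hU12 hU13 hstar hIR
  have hIpos : 0 < (a + b) ^ 2 + (x2 * x3 + y2 * y3)
      - (x1 * x3 + y1 * y3) - (x1 * x2 + y1 * y2) :=
    pos_factor _ _ _ hCpos (mul_pos (mul_pos hM2 hM3) hM1) hI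
  clear hI
  have hGam : (a + b) ^ 6 + 2 * (x2 * x3 + y2 * y3) * (x1 * x3 + y1 * y3) * (x1 * x2 + y1 * y2)
      - (a + b) ^ 2 * ((x2 * x3 + y2 * y3) ^ 2 + (x1 * x3 + y1 * y3) ^ 2
        + (x1 * x2 + y1 * y2) ^ 2) = 0 := by
    linear_combination
      ((x2 * x3 + y2 * y3) ^ 2 - (x2 ^ 2 + y2 ^ 2) * (x3 ^ 2 + y3 ^ 2)) * hc1
      + ((x1 * x3 + y1 * y3) ^ 2 - (a + b) ^ 2 * (x3 ^ 2 + y3 ^ 2)) * hc2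
      + ((x1 * x2 + y1 * y2) ^ 2 - (a + b) ^ 4) * hc3
  have hkey : ((a + b) * ((x2 - x1) * (x3 - x1) + (y2 - y1) * (y3 - y1))) ^ 2
      = (((a + b) ^ 2 + (x2 * x3 + y2 * y3)) / 2)
        * (((x2 - x1) ^ 2 + (y2 - y1) ^ 2) * ((x3 - x1) ^ 2 + (y3 - y1) ^ 2)) := by
    rw [hIeq, hn2, hn3]
    linear_combination (-1 : ℝ) * hGam
  clear hGam
  have hIpos' : 0 ≤ (x2 - x1) * (x3 - x1) + (y2 - y1) * (y3 - y1) := by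
    rw [hIeq]; exact hIpos.le
  have hddlo : b ^ 2 ≤ ((a + b) ^ 2 + (x2 * x3 + y2 * y3)) / 2 := by linarith
  have hddhi : ((a + b) ^ 2 + (x2 * x3 + y2 * y3)) / 2 ≤ a ^ 2 := by linarith
  exact ⟨div_lower b (a + b) _ _ _ _ hR hn2pos hn3pos hIpos' hb.le hkey hddlo,
    div_upper a (a + b) _ _ _ _ hR hn2pos hn3pos hIpos' ha.le hkey hddhi⟩

private lemma coord_sq_pos (P Q : EuclideanSpace ℝ (Fin 2)) (h : P ≠ Q) :
    0 < (P 0 - Q 0) ^ 2 + (P 1 - Q 1) ^ 2 := by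
  rcases lt_or_eq_of_le (by positivity : (0:ℝ) ≤ (P 0 - Q 0) ^ 2 + (P 1 - Q 1) ^ 2) with hlt | he
  · exact hlt
  · exfalso
    apply h
    have h0 : P 0 = Q 0 := by nlinarith [sq_nonneg (P 0 - Q 0), sq_nonneg (P 1 - Q 1)]
    have h1 : P 1 = Q 1 := by nlinarith [sq_nonneg (P 0 - Q 0), sq_nonneg (P 1 - Q 1)]
    ext i
    fin_cases i
    · exact h0
    · exact h1

private lemma circle_coord (a b : ℝ) (P : EuclideanSpace ℝ (Fin 2))
    (hR : 0 ≤ a + b) (hC : dist P 0 = a + b) :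
    P 0 ^ 2 + P 1 ^ 2 = (a + b) ^ 2 := by
  rw [EuclideanSpace.dist_eq] at hC
  have h1 : ∑ i : Fin 2, dist (P i) ((0 : EuclideanSpace ℝ (Fin 2)) i) ^ 2
      = (P 0 - 0) ^ 2 + (P 1 - 0) ^ 2 := by
    simp [Fin.sum_univ_two, Real.dist_eq, sq_abs]
  rw [h1] at hC
  have := Real.sq_sqrt (by positivity : (0:ℝ) ≤ (P 0 - 0) ^ 2 + (P 1 - 0) ^ 2)
  rw [hC] at this
  simpa using this.symm

private lemma cos_angle_coord (A B C : EuclideanSpace ℝ (Fin 2)) :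
    Real.cos (∠ B A C) = ((B 0 - A 0) * (C 0 - A 0) + (B 1 - A 1) * (C 1 - A 1)) /
      (Real.sqrt ((B 0 - A 0) ^ 2 + (B 1 - A 1) ^ 2) *
        Real.sqrt ((C 0 - A 0) ^ 2 + (C 1 - A 1) ^ 2)) := by
  have h1 : ∠ B A C = InnerProductGeometry.angle (B -ᵥ A) (C -ᵥ A) := rfl
  rw [h1, InnerProductGeometry.cos_angle]
  have hinner : (inner ℝ (B -ᵥ A) (C -ᵥ A) : ℝ)
      = (B 0 - A 0) * (C 0 - A 0) + (B 1 - A 1) * (C 1 - A 1) := by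
    simp [PiLp.inner_apply, RCLike.inner_apply, Fin.sum_univ_two]
    try ring
  have hnB : ‖B -ᵥ A‖ = Real.sqrt ((B 0 - A 0) ^ 2 + (B 1 - A 1) ^ 2) := by
    rw [show B -ᵥ A = B - A from rfl, EuclideanSpace.norm_eq]
    simp [Fin.sum_univ_two, Real.norm_eq_abs, sq_abs]
  have hnC : ‖C -ᵥ A‖ = Real.sqrt ((C 0 - A 0) ^ 2 + (C 1 - A 1) ^ 2) := by
    rw [show C -ᵥ A = C - A from rfl, EuclideanSpace.norm_eq]
    simp [Fin.sum_univ_two, Real.norm_eq_abs, sq_abs]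
  rw [hinner, hnB, hnC]

private lemma acute_of_cos_pos {θ : ℝ} (h0 : 0 < Real.cos θ) (hθ : θ ≤ Real.pi) :
    θ < Real.pi / 2 := by
  by_contra h
  push_neg at h
  have := Real.cos_nonpos_of_pi_div_two_le_of_le h
    (by linarith [Real.pi_pos])
  linarith

/-- For `a > b > 0`: the cosine of each interior angle of any triangle of the
circumcircle family (inscribed in the circle of radius `a + b` centered at the
origin, side lines tangent to the concentric ellipse `x²/a² + y²/b² = 1`) lies
in the interval `[b/(a+b), a/(a+b)]`; in particular every such triangle is
acute (all interior angles are less than `π/2`). -/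
theorem circumcircle_family_cosine_bounds_acute (a b : ℝ) (hb : 0 < b) (hab : b < a)
    (P₁ P₂ P₃ : EuclideanSpace ℝ (Fin 2))
    (hind : AffineIndependent ℝ ![P₁, P₂, P₃])
    (hC₁ : dist P₁ 0 = a + b) (hC₂ : dist P₂ 0 = a + b) (hC₃ : dist P₃ 0 = a + b)
    (ht₁ : SideTangentToEllipse a b P₁ P₂)
    (ht₂ : SideTangentToEllipse a b P₂ P₃)
    (ht₃ : SideTangentToEllipse a b P₃ P₁) :
    (Real.cos (∠ P₂ P₁ P₃) ∈ Set.Icc (b / (a + b)) (a / (a + b)) ∧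
     Real.cos (∠ P₁ P₂ P₃) ∈ Set.Icc (b / (a + b)) (a / (a + b)) ∧
     Real.cos (∠ P₁ P₃ P₂) ∈ Set.Icc (b / (a + b)) (a / (a + b))) ∧
    (∠ P₂ P₁ P₃ < Real.pi / 2 ∧ ∠ P₁ P₂ P₃ < Real.pi / 2 ∧
     ∠ P₁ P₃ P₂ < Real.pi / 2) := by
  have hR : (0:ℝ) < a + b := by linarith
  -- circle equations
  have hc1 := circle_coord a b P₁ hR.le hC₁
  have hc2 := circle_coord a b P₂ hR.le hC₂
  have hc3 := circle_coord a b P₃ hR.le hC₃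
  -- distinctness
  have hne12 : P₁ ≠ P₂ := fun h =>
    (by decide : (0 : Fin 3) ≠ 1) (hind.injective (by simpa using h))
  have hne23 : P₂ ≠ P₃ := fun h =>
    (by decide : (1 : Fin 3) ≠ 2) (hind.injective (by simpa using h))
  have hne31 : P₃ ≠ P₁ := fun h =>
    (by decide : (2 : Fin 3) ≠ 0) (hind.injective (by simpa using h))
  -- tangency relations
  obtain ⟨p₁, q₁, e₁3, e₁i, e₁j⟩ := ht₁
  obtain ⟨p₂, q₂, e₂3, e₂i, e₂j⟩ := ht₂
  obtain ⟨p₃, q₃, e₃3, e₃i, e₃j⟩ := ht₃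
  have hK12 : b * (P₁ 0 * P₂ 0) + a * (P₁ 1 * P₂ 1) = -(a * b * (a + b)) :=
    tangent_rel a b hb hab _ _ _ _ hc1 hc2 (coord_sq_pos _ _ hne12) p₁ q₁ e₁3 e₁i e₁j
  have hK23 : b * (P₂ 0 * P₃ 0) + a * (P₂ 1 * P₃ 1) = -(a * b * (a + b)) :=
    tangent_rel a b hb hab _ _ _ _ hc2 hc3 (coord_sq_pos _ _ hne23) p₂ q₂ e₂3 e₂i e₂j
  have hK31 : b * (P₃ 0 * P₁ 0) + a * (P₃ 1 * P₁ 1) = -(a * b * (a + b)) :=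
    tangent_rel a b hb hab _ _ _ _ hc3 hc1 (coord_sq_pos _ _ hne31) p₃ q₃ e₃3 e₃i e₃j
  have hK13 : b * (P₁ 0 * P₃ 0) + a * (P₁ 1 * P₃ 1) = -(a * b * (a + b)) := by
    linear_combination hK31
  have hK21 : b * (P₂ 0 * P₁ 0) + a * (P₂ 1 * P₁ 1) = -(a * b * (a + b)) := by
    linear_combination hK12
  have hK32 : b * (P₃ 0 * P₂ 0) + a * (P₃ 1 * P₂ 1) = -(a * b * (a + b)) := by
    linear_combination hK23
  -- cosine bounds at each vertex
  have hA1 := cos_bounds_aux a b hb hab (P₁ 0) (P₁ 1) (P₂ 0) (P₂ 1) (P₃ 0) (P₃ 1)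
    hc1 hc2 hc3 hK12 hK23 hK13
  have hA2 := cos_bounds_aux a b hb hab (P₂ 0) (P₂ 1) (P₁ 0) (P₁ 1) (P₃ 0) (P₃ 1)
    hc2 hc1 hc3 hK21 hK13 hK23
  have hA3 := cos_bounds_aux a b hb hab (P₃ 0) (P₃ 1) (P₁ 0) (P₁ 1) (P₂ 0) (P₂ 1)
    hc3 hc1 hc2 hK31 hK12 hK32
  rw [← cos_angle_coord P₁ P₂ P₃] at hA1
  rw [← cos_angle_coord P₂ P₁ P₃] at hA2
  rw [← cos_angle_coord P₃ P₁ P₂] at hA3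
  have hbR : 0 < b / (a + b) := by positivity
  have hang1 : ∠ P₂ P₁ P₃ < Real.pi / 2 :=
    acute_of_cos_pos (lt_of_lt_of_le hbR hA1.1) (EuclideanGeometry.angle_le_pi _ _ _)
  have hang2 : ∠ P₁ P₂ P₃ < Real.pi / 2 :=
    acute_of_cos_pos (lt_of_lt_of_le hbR hA2.1) (EuclideanGeometry.angle_le_pi _ _ _)
  have hang3 : ∠ P₁ P₃ P₂ < Real.pi / 2 :=
    acute_of_cos_pos (lt_of_lt_of_le hbR hA3.1) (EuclideanGeometry.angle_le_pi _ _ _)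
  exact ⟨⟨Set.mem_Icc.mpr ⟨hA1.1, hA1.2⟩, Set.mem_Icc.mpr ⟨hA2.1, hA2.2⟩,
    Set.mem_Icc.mpr ⟨hA3.1, hA3.2⟩⟩, hang1, hang2, hang3⟩
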